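/- arXiv:2504.09489 — 2 statements merged into one kernel-verified Lean document; each statement's English description precedes it below -/
import Mathlib

section
/- Let γ : [0, l] → ℝ² be a continuous path. Define recursively x₁ = 0 and, for i ≥ 2, x_i = max { x ∈ [x_{i−1}, l] : dist(γ(x_{i−1}), γ(x)) ≤ 1/2 } (this maximum exists by compactness and continuity). Then for all indices j < k with x_k < l and x_j < x_k, we have dist(γ(x_j), γ(x_k)) ≥ 1/2. -/
theorem stmt7 (l : ℝ) (hl : 0 < l)
    (γ : ℝ → EuclideanSpace ℝ (Fin 2)) (hγ : ContinuousOn γ (Set.Icc 0 l))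
    (x : ℕ → ℝ) (hx1 : x 1 = 0)
    (hxi : ∀ i : ℕ, 2 ≤ i →
      IsGreatest {t : ℝ | x (i - 1) ≤ t ∧ t ≤ l ∧
        dist (γ (x (i - 1))) (γ t) ≤ 1 / 2} (x i)) :
    ∀ j k : ℕ, 1 ≤ j → j < k → x k < l → x j < x k →
      1 / 2 ≤ dist (γ (x j)) (γ (x k)) := by
  have hmono : ∀ i m : ℕ, 1 ≤ i → i ≤ m → x i ≤ x m := by
    intro i m hi him
    induction m with
    | zero => omega
    | succ n ih =>
      rcases Nat.lt_or_ge i (n + 1) with h | h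
      · have h2 : x n ≤ x (n + 1) := by
          have hn2 : 2 ≤ n + 1 := by omega
          have := (hxi (n + 1) hn2).1.1
          simpa using this
        exact le_trans (ih (by omega)) h2
      · have : i = n + 1 := by omega
        simp [this]
  intro j k hj hjk hkl hxjk
  by_contra hlt
  push_neg at hlt
  have hG := hxi (j + 1) (by omega)
  have hs : j + 1 - 1 = j := by omega
  rw [hs] at hG
  have hxkl : x k ≤ l := (hxi k (by omega)).1.2.1
  have h1 : x k ≤ x (j + 1) := hG.2 ⟨le_of_lt hxjk, hxkl, le_of_lt hlt⟩
  have h2 : x (j + 1) ≤ x k := hmono (j + 1) k (by omega) (by omega)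
  have heq : x (j + 1) = x k := le_antisymm h2 h1
  have hxk0 : 0 ≤ x k := by
    have := hmono 1 k le_rfl (by omega)
    linarith [hx1 ▸ this]
  have hc : ContinuousWithinAt γ (Set.Icc 0 l) (x k) := hγ (x k) ⟨hxk0, hxkl⟩
  have ht : Filter.Tendsto (fun t => dist (γ (x j)) (γ t)) (nhdsWithin (x k) (Set.Icc 0 l))
      (nhds (dist (γ (x j)) (γ (x k)))) := Filter.Tendsto.dist tendsto_const_nhds hc
  have hev : {t : ℝ | dist (γ (x j)) (γ t) < 1 / 2} ∈ nhdsWithin (x k) (Set.Icc 0 l) :=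
    ht (Iio_mem_nhds hlt)
  rw [Metric.mem_nhdsWithin_iff] at hev
  obtain ⟨ε, hε, hball⟩ := hev
  set t := min (x k + ε / 2) l with htdef
  have htgt : x k < t := lt_min (by linarith) hkl
  have htl : t ≤ l := min_le_right _ _
  have htb : t ∈ Metric.ball (x k) ε := by
    rw [Metric.mem_ball, Real.dist_eq, abs_lt]
    constructor
    · have : x k + ε / 2 ≥ t := min_le_left _ _
      linarith
    · have : t ≤ x k + ε / 2 := min_le_left _ _
      linarith
  have htmem : t ∈ Set.Icc (0 : ℝ) l := ⟨by linarith, htl⟩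
  have htdist : dist (γ (x j)) (γ t) < 1 / 2 := hball ⟨htb, htmem⟩
  have : t ≤ x (j + 1) := hG.2 ⟨by linarith, htl, le_of_lt htdist⟩
  rw [heq] at this
  linarith
end

section
/- Assume the fundamental lemma: there is a constant c = 10⁻¹⁰ such that for any unit square S_a of a packing and any S_b (another unit square of the packing or the boundary square) with dist(S_a, S_b) ≤ 1, there is an open disk of radius 2 containing S_a whose wasted area is at least c·θ(S_a, S_b). Then for any squares S_a, S_b of the packing joined by a continuous path γ : [0, l] → ℝ² (with γ(0) ∈ S_a, γ(l) ∈ S_b), the wasted area in the open 5-neighborhood of the image of γ is at least (c/1600)·θ(S_a, S_b). -/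
open Real Metric MeasureTheory

noncomputable section

abbrev Plane := EuclideanSpace ℝ (Fin 2)

def dirVec (φ : ℝ) : Plane := WithLp.toLp 2 ![Real.cos φ, Real.sin φ]

def unitSq (c : Plane) (φ : ℝ) : Set Plane :=
  {p | ∃ s t : ℝ, s ∈ Set.Icc (0 : ℝ) 1 ∧ t ∈ Set.Icc (0 : ℝ) 1 ∧
    p = c + s • dirVec φ + t • dirVec (φ + π / 2)}

def bigSq (x : ℝ) : Set Plane :=
  {p | p 0 ∈ Set.Icc (0 : ℝ) x ∧ p 1 ∈ Set.Icc (0 : ℝ) x}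

def sqAngle (φ ψ : ℝ) : ℝ :=
  sInf {d : ℝ | ∃ k : ℤ, d = |φ - ψ + k * (π / 2)|}

def setDist (A B : Set Plane) : ℝ :=
  sInf {d : ℝ | ∃ a ∈ A, ∃ b ∈ B, d = dist a b}

def waste (x : ℝ) {k : ℕ} (ctr : Fin k → Plane) (ang : Fin k → ℝ) (A : Set Plane) :
    ENNReal :=
  volume ((A ∩ bigSq x) \ ⋃ i, unitSq (ctr i) (ang i))

def rothC : ℝ := 10 ^ (-10 : ℤ)

-- ### basic lemmas

lemma unitSq_mem_self (c : Plane) (φ : ℝ) : c ∈ unitSq c φ := by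
  refine ⟨0, 0, by norm_num, by norm_num, by simp⟩

lemma unitSq_nonempty (c : Plane) (φ : ℝ) : (unitSq c φ).Nonempty :=
  ⟨c, unitSq_mem_self c φ⟩

lemma setDist_comm (A B : Set Plane) : setDist A B = setDist B A := by
  unfold setDist
  congr 1
  ext d
  constructor
  · rintro ⟨a, ha, b, hb, rfl⟩; exact ⟨b, hb, a, ha, dist_comm a b⟩
  · rintro ⟨b, hb, a, ha, rfl⟩; exact ⟨a, ha, b, hb, dist_comm b a⟩

lemma setDist_le {A B : Set Plane} {a b : Plane} (ha : a ∈ A) (hb : b ∈ B) :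
    setDist A B ≤ dist a b := by
  apply csInf_le
  · exact ⟨0, by rintro d ⟨a', _, b', _, rfl⟩; positivity⟩
  · exact ⟨a, ha, b, hb, rfl⟩

-- ### sqAngle lemmas

lemma sqAngle_nonneg (φ ψ : ℝ) : 0 ≤ sqAngle φ ψ := by
  apply Real.sInf_nonneg
  rintro d ⟨k, rfl⟩; positivity

lemma sqAngle_set_nonempty (φ ψ : ℝ) :
    {d : ℝ | ∃ k : ℤ, d = |φ - ψ + k * (π / 2)|}.Nonempty :=
  ⟨|φ - ψ + (0:ℤ) * (π / 2)|, 0, rfl⟩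

lemma sqAngle_bddBelow (φ ψ : ℝ) :
    BddBelow {d : ℝ | ∃ k : ℤ, d = |φ - ψ + k * (π / 2)|} :=
  ⟨0, by rintro d ⟨k, rfl⟩; positivity⟩

lemma sqAngle_le (φ ψ : ℝ) (k : ℤ) : sqAngle φ ψ ≤ |φ - ψ + k * (π / 2)| :=
  csInf_le (sqAngle_bddBelow φ ψ) ⟨k, rfl⟩

lemma sqAngle_self (φ : ℝ) : sqAngle φ φ = 0 := by
  have h := sqAngle_le φ φ 0
  simp at h
  exact le_antisymm h (sqAngle_nonneg φ φ)

lemma sqAngle_symm (φ ψ : ℝ) : sqAngle φ ψ = sqAngle ψ φ := by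
  unfold sqAngle
  congr 1
  ext d
  constructor
  · rintro ⟨k, rfl⟩
    exact ⟨-k, by push_cast; rw [← abs_neg]; ring_nf⟩
  · rintro ⟨k, rfl⟩
    exact ⟨-k, by push_cast; rw [← abs_neg]; ring_nf⟩

lemma sqAngle_triangle (φ ψ χ : ℝ) : sqAngle φ χ ≤ sqAngle φ ψ + sqAngle ψ χ := by
  refine le_of_forall_pos_le_add fun ε hε => ?_
  obtain ⟨d1, ⟨k1, rfl⟩, h1⟩ := Real.lt_sInf_add_pos (sqAngle_set_nonempty φ ψ) (half_pos hε)
  obtain ⟨d2, ⟨k2, rfl⟩, h2⟩ := Real.lt_sInf_add_pos (sqAngle_set_nonempty ψ χ) (half_pos hε)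
  have key : sqAngle φ χ ≤ |φ - χ + (k1 + k2 : ℤ) * (π / 2)| := sqAngle_le φ χ (k1 + k2)
  have : |φ - χ + (k1 + k2 : ℤ) * (π / 2)| ≤
      |φ - ψ + k1 * (π / 2)| + |ψ - χ + k2 * (π / 2)| := by
    have : φ - χ + (k1 + k2 : ℤ) * (π / 2) =
        (φ - ψ + k1 * (π / 2)) + (ψ - χ + k2 * (π / 2)) := by push_cast; ring
    rw [this]; exact abs_add_le _ _
  have := key.trans this
  unfold sqAngle at *
  linarith

lemma sqAngle_le_pi_div_four (φ ψ : ℝ) : sqAngle φ ψ ≤ π / 4 := by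
  set δ := φ - ψ
  have hπ : (0:ℝ) < π / 2 := by positivity
  refine (sqAngle_le φ ψ (-round (δ / (π / 2)))).trans ?_
  have h := abs_sub_round (δ / (π / 2))
  have : |δ + (-round (δ / (π / 2)) : ℤ) * (π / 2)| =
      |δ / (π / 2) - round (δ / (π / 2))| * (π / 2) := by
    have hne : (π / 2) ≠ 0 := ne_of_gt hπ
    have heq : δ + (-round (δ / (π / 2)) : ℤ) * (π / 2) =
        (δ / (π / 2) - round (δ / (π / 2))) * (π / 2) := by
      push_cast; field_simp; ring
    rw [heq, abs_mul, abs_of_pos hπ]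
  rw [this]
  calc |δ / (π / 2) - round (δ / (π / 2))| * (π / 2) ≤ (1/2) * (π/2) := by
        apply mul_le_mul_of_nonneg_right h hπ.le
    _ = π / 4 := by ring

-- ### frontier on segment

lemma exists_frontier_segment {s : Set Plane} {p q : Plane} (hp : p ∈ s) (hq : q ∉ s) :
    ∃ w ∈ frontier s, dist p w ≤ dist p q := by
  set f : ℝ → Plane := fun t => AffineMap.lineMap p q t with hf
  have hfc : Continuous f := AffineMap.lineMap_continuous
  set T : Set ℝ := Set.Icc (0:ℝ) 1 ∩ f ⁻¹' (closure s) with hT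
  have hT0 : (0:ℝ) ∈ T := by
    constructor
    · exact ⟨le_refl 0, zero_le_one⟩
    · simp only [Set.mem_preimage, hf, AffineMap.lineMap_apply_zero]
      exact subset_closure hp
  have hTne : T.Nonempty := ⟨0, hT0⟩
  have hTbdd : BddAbove T := ⟨1, fun t ht => ht.1.2⟩
  have hTclosed : IsClosed T := (isClosed_Icc).inter (isClosed_closure.preimage hfc)
  set t₀ := sSup T with ht₀
  have ht₀T : t₀ ∈ T := hTclosed.csSup_mem hTne hTbdd
  have ht₀mem : t₀ ∈ Set.Icc (0:ℝ) 1 := ht₀T.1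
  have hfclos : f t₀ ∈ closure s := ht₀T.2
  have hdist : dist p (f t₀) ≤ dist p q := by
    have : dist (f t₀) p = |t₀| * dist p q := by
      rw [hf]; simp [dist_lineMap_left]
    rw [dist_comm]
    rw [this, abs_of_nonneg ht₀mem.1]
    nlinarith [dist_nonneg (x := p) (y := q), ht₀mem.2]
  by_cases h1 : t₀ = 1
  · -- then q ∈ closure s but q ∉ s, so q ∈ frontier s
    refine ⟨q, ?_, le_refl _⟩
    have : f t₀ = q := by rw [h1, hf]; simp
    rw [this] at hfclos
    rw [frontier_eq_closure_inter_closure]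
    exact ⟨hfclos, subset_closure hq⟩
  · have ht₀lt : t₀ < 1 := lt_of_le_of_ne ht₀mem.2 h1
    refine ⟨f t₀, ?_, hdist⟩
    rw [frontier_eq_closure_inter_closure]
    refine ⟨hfclos, ?_⟩
    -- f t₀ is a limit of points not in s
    have key : ∀ t, t₀ < t → t ≤ 1 → f t ∉ s := by
      intro t hlt hle hmem
      have : t ∈ T := ⟨⟨(ht₀mem.1.trans hlt.le), hle⟩, subset_closure hmem⟩
      exact absurd (le_csSup hTbdd this) (not_le.mpr hlt)
    have hnb : Filter.NeBot (nhdsWithin t₀ (Set.Ioo t₀ 1)) :=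
      left_nhdsWithin_Ioo_neBot ht₀lt
    have htend : Filter.Tendsto f (nhdsWithin t₀ (Set.Ioo t₀ 1)) (nhds (f t₀)) :=
      (hfc.tendsto t₀).mono_left nhdsWithin_le_nhds
    apply mem_closure_of_tendsto htend
    filter_upwards [self_mem_nhdsWithin] with t ht
    exact key t ht.1 ht.2.le

-- ### ball inside set from infDist to complement

lemma ball_subset_of_infDist_compl {s : Set Plane} {z : Plane} {r : ℝ}
    (h : r ≤ infDist z sᶜ) (hz : z ∈ s) : ball z r ⊆ s := by
  intro y hy
  by_contra hys
  have hys' : y ∈ sᶜ := hys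
  have h2 : infDist z sᶜ ≤ dist z y := Metric.infDist_le_dist_of_mem hys'
  rw [mem_ball, dist_comm] at hy
  linarith

lemma mem_of_infDist_compl_pos {s : Set Plane} {z : Plane} {r : ℝ}
    (hr : 0 < r) (h : r ≤ infDist z sᶜ) (hne : sᶜ.Nonempty) : z ∈ s := by
  by_contra hz
  have hz' : z ∈ sᶜ := hz
  have : infDist z sᶜ = 0 := Metric.infDist_zero_of_mem hz'
  linarith
-- ### volumes of boxes

lemma volume_box (a b : Fin 2 → ℝ) :
    volume {p : Plane | ∀ i, p i ∈ Set.Icc (a i) (b i)} =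
      ENNReal.ofReal (b 0 - a 0) * ENNReal.ofReal (b 1 - a 1) := by
  have hmp := EuclideanSpace.volume_preserving_symm_measurableEquiv_toLp (ι := Fin 2)
  have hset : {p : Plane | ∀ i, p i ∈ Set.Icc (a i) (b i)} =
      (MeasurableEquiv.toLp 2 (Fin 2 → ℝ)).symm ⁻¹'
        (Set.univ.pi fun i => Set.Icc (a i) (b i)) := by
    ext p
    simp only [Set.mem_preimage, Set.mem_pi, Set.mem_univ, forall_true_left, Set.mem_setOf_eq]
    rfl
  rw [hset, MeasurePreserving.measure_preimage_equiv hmp]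
  rw [volume_pi_pi]
  simp [Real.volume_Icc, Fin.prod_univ_two]

lemma volume_bigSq_one : volume (bigSq 1) = 1 := by
  have : bigSq 1 = {p : Plane | ∀ i, p i ∈ Set.Icc ((fun _ => (0:ℝ)) i) ((fun _ => (1:ℝ)) i)} := by
    ext p
    constructor
    · rintro ⟨h0, h1⟩ i
      fin_cases i <;> assumption
    · intro h
      exact ⟨h 0, h 1⟩
  rw [this, volume_box]
  norm_num

lemma abs_coord_le_dist (p q : Plane) (i : Fin 2) : |p i - q i| ≤ dist p q := by
  rw [EuclideanSpace.dist_eq]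
  rw [← Real.sqrt_sq_eq_abs]
  apply Real.sqrt_le_sqrt
  have : (p i - q i) ^ 2 = dist (p i) (q i) ^ 2 := by
    rw [Real.dist_eq, sq_abs]
  rw [this]
  exact Finset.single_le_sum (fun j _ => sq_nonneg (dist (p j) (q j))) (Finset.mem_univ i)

lemma ball_subset_box (y : Plane) (r : ℝ) :
    ball y r ⊆ {p : Plane | ∀ i, p i ∈ Set.Icc (y i - r) (y i + r)} := by
  intro p hp i
  have h := (abs_coord_le_dist p y i).trans (mem_ball.mp hp).le
  rw [abs_le] at h
  constructor <;> linarith [h.1, h.2]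

lemma volume_ball_le (y : Plane) (r : ℝ) (hr : 0 ≤ r) :
    volume (ball y r) ≤ ENNReal.ofReal (2*r) * ENNReal.ofReal (2*r) := by
  calc volume (ball y r) ≤
      volume {p : Plane | ∀ i, p i ∈ Set.Icc ((fun i => y i - r) i) ((fun i => y i + r) i)} :=
        measure_mono (ball_subset_box y r)
    _ = ENNReal.ofReal (2*r) * ENNReal.ofReal (2*r) := by
        rw [volume_box]; congr 1 <;> congr 1 <;> ring

lemma box_subset_ball (y : Plane) :
    {p : Plane | ∀ i, p i ∈ Set.Icc (y i - 1/16) (y i + 1/16)} ⊆ ball y (1/4 : ℝ) := by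
  intro p hp
  rw [mem_ball, EuclideanSpace.dist_eq]
  have h : ∀ i, dist (p i) (y i) ^ 2 ≤ (1/16)^2 := by
    intro i
    have := hp i
    rw [Real.dist_eq]
    rw [sq_abs]
    nlinarith [this.1, this.2]
  have hsum : ∑ i, dist (p i) (y i) ^ 2 ≤ 2 * (1/16)^2 := by
    rw [Fin.sum_univ_two]
    linarith [h 0, h 1]
  calc Real.sqrt (∑ i, dist (p i) (y i) ^ 2) ≤ Real.sqrt (2 * (1/16)^2) :=
        Real.sqrt_le_sqrt hsum
    _ < 1/4 := by
        rw [show (2 * (1/16)^2 : ℝ) = 1/128 by norm_num]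
        rw [show (1/4 : ℝ) = Real.sqrt (1/16) by
          rw [show (1/16:ℝ) = (1/4)^2 by norm_num, Real.sqrt_sq (by norm_num)]]
        exact Real.sqrt_lt_sqrt (by norm_num) (by norm_num)

lemma volume_small_box_ge (y : Plane) :
    ENNReal.ofReal (1/64 : ℝ) ≤ volume (ball y (1/4 : ℝ)) := by
  have hm : volume {p : Plane | ∀ i, p i ∈ Set.Icc (y i - 1/16) (y i + 1/16)}
      ≤ volume (ball y (1/4 : ℝ)) := measure_mono (box_subset_ball y)
  calc ENNReal.ofReal (1/64 : ℝ) =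
      volume {p : Plane | ∀ i, p i ∈ Set.Icc ((fun i => y i - 1/16) i) ((fun i => y i + 1/16) i)} := by
        rw [volume_box]; rw [← ENNReal.ofReal_mul (by norm_num)]; norm_num
    _ ≤ volume (ball y (1/4 : ℝ)) := hm
-- ### properties of unit squares

open Pointwise

def sqLin (φ : ℝ) : Plane →ₗ[ℝ] Plane where
  toFun := fun y => y 0 • dirVec φ + y 1 • dirVec (φ + π / 2)
  map_add' := by
    intro y z
    show (y + z) 0 • dirVec φ + (y + z) 1 • dirVec (φ + π / 2) = _
    have h0 : (y + z) 0 = y 0 + z 0 := rfl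
    have h1 : (y + z) 1 = y 1 + z 1 := rfl
    rw [h0, h1, add_smul, add_smul]
    abel
  map_smul' := by
    intro r y
    show (r • y) 0 • dirVec φ + (r • y) 1 • dirVec (φ + π / 2) = _
    have h0 : (r • y) 0 = r * y 0 := rfl
    have h1 : (r • y) 1 = r * y 1 := rfl
    rw [h0, h1, mul_smul, mul_smul, ← smul_add]
    rfl

lemma sqLin_det (φ : ℝ) : LinearMap.det (sqLin φ) = 1 := by
  let b := PiLp.basisFun 2 ℝ (Fin 2)
  rw [← LinearMap.det_toMatrix b]
  rw [Matrix.det_fin_two]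
  have hb : ∀ j : Fin 2, b j = EuclideanSpace.single j (1:ℝ) := fun j => PiLp.basisFun_apply 2 ℝ (Fin 2) j
  have hrepr : ∀ (y : Plane) (i : Fin 2), b.repr y i = y i := fun y i => by
    simp [b, PiLp.basisFun_repr]
  have happ : ∀ i j, LinearMap.toMatrix b b (sqLin φ) i j = (sqLin φ) (b j) i := by
    intro i j
    rw [LinearMap.toMatrix_apply, hrepr]
  have hsingle : ∀ (j i : Fin 2), (EuclideanSpace.single j (1:ℝ)) i = if i = j then 1 else 0 := by
    intro j i
    rw [EuclideanSpace.single_apply]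
  have hval : ∀ j i : Fin 2, (sqLin φ) (b j) i =
      (if (0:Fin 2) = j then 1 else 0) * dirVec φ i + (if (1:Fin 2) = j then 1 else 0) * dirVec (φ + π/2) i := by
    intro j i
    show ((b j) 0 • dirVec φ + (b j) 1 • dirVec (φ + π / 2)) i = _
    have : ((b j) 0 • dirVec φ + (b j) 1 • dirVec (φ + π / 2)) i
        = (b j) 0 * dirVec φ i + (b j) 1 * dirVec (φ + π / 2) i := rfl
    rw [this, hb, hsingle, hsingle]
  rw [happ, happ, happ, happ, hval, hval, hval, hval]
  rw [if_pos rfl, if_pos rfl, if_neg (by decide), if_neg (by decide)]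
  have d00 : dirVec φ 0 = Real.cos φ := by simp [dirVec]
  have d01 : dirVec φ 1 = Real.sin φ := by simp [dirVec]
  have d10 : dirVec (φ + π/2) 0 = Real.cos (φ + π/2) := by simp [dirVec]
  have d11 : dirVec (φ + π/2) 1 = Real.sin (φ + π/2) := by simp [dirVec]
  rw [d00, d01, d10, d11, Real.sin_add_pi_div_two, Real.cos_add_pi_div_two]
  ring_nf
  nlinarith [Real.sin_sq_add_cos_sq φ]

lemma unitSq_eq_image (c : Plane) (φ : ℝ) :
    unitSq c φ = c +ᵥ ((sqLin φ) '' bigSq 1) := by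
  ext p
  constructor
  · rintro ⟨s, t, hs, ht, rfl⟩
    refine ⟨(sqLin φ) (WithLp.toLp 2 ![s, t]), ⟨WithLp.toLp 2 ![s, t], ⟨?_, ?_⟩, rfl⟩, ?_⟩
    · show s ∈ Set.Icc (0:ℝ) 1; exact hs
    · show t ∈ Set.Icc (0:ℝ) 1; exact ht
    · show c + (sqLin φ) (WithLp.toLp 2 ![s, t]) = c + s • dirVec φ + t • dirVec (φ + π/2)
      have : (sqLin φ) (WithLp.toLp 2 ![s, t]) = s • dirVec φ + t • dirVec (φ + π/2) := by
        show (WithLp.toLp 2 ![s,t] : Plane) 0 • dirVec φ + (WithLp.toLp 2 ![s,t] : Plane) 1 • dirVec (φ + π / 2) = _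
        rfl
      rw [this, add_assoc]
  · rintro ⟨q, ⟨y, ⟨hy0, hy1⟩, rfl⟩, rfl⟩
    refine ⟨y 0, y 1, hy0, hy1, ?_⟩
    show c + (sqLin φ) y = c + y 0 • dirVec φ + y 1 • dirVec (φ + π/2)
    have : (sqLin φ) y = y 0 • dirVec φ + y 1 • dirVec (φ + π/2) := rfl
    rw [this, add_assoc]

lemma volume_unitSq (c : Plane) (φ : ℝ) : volume (unitSq c φ) = 1 := by
  rw [unitSq_eq_image]
  rw [measure_vadd]
  rw [MeasureTheory.Measure.addHaar_image_linearMap]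
  rw [sqLin_det, volume_bigSq_one]
  simp

lemma unitSq_isCompact (c : Plane) (φ : ℝ) : IsCompact (unitSq c φ) := by
  have : unitSq c φ = (fun st : ℝ × ℝ => c + st.1 • dirVec φ + st.2 • dirVec (φ + π/2)) ''
      (Set.Icc 0 1 ×ˢ Set.Icc 0 1) := by
    ext p
    constructor
    · rintro ⟨s, t, hs, ht, rfl⟩; exact ⟨(s, t), ⟨hs, ht⟩, rfl⟩
    · rintro ⟨⟨s, t⟩, ⟨hs, ht⟩, rfl⟩; exact ⟨s, t, hs, ht, rfl⟩
  rw [this]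
  apply (isCompact_Icc.prod isCompact_Icc).image
  fun_prop

lemma unitSq_isClosed (c : Plane) (φ : ℝ) : IsClosed (unitSq c φ) :=
  (unitSq_isCompact c φ).isClosed

lemma unitSq_measurable (c : Plane) (φ : ℝ) : MeasurableSet (unitSq c φ) :=
  (unitSq_isClosed c φ).measurableSet

lemma bigSq_isClosed (x : ℝ) : IsClosed (bigSq x) := by
  have : bigSq x = (fun p : Plane => p 0) ⁻¹' Set.Icc 0 x ∩ (fun p : Plane => p 1) ⁻¹' Set.Icc 0 x := rfl
  rw [this]
  exact ((isClosed_Icc.preimage (by fun_prop))).inter (isClosed_Icc.preimage (by fun_prop))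

lemma bigSq_measurable (x : ℝ) : MeasurableSet (bigSq x) :=
  (bigSq_isClosed x).measurableSet
-- ### counting squares in a ball

lemma squares_count {k : ℕ} (ctr : Fin k → Plane) (ang : Fin k → ℝ)
    (hdisj : ∀ i j, i ≠ j →
      volume (unitSq (ctr i) (ang i) ∩ unitSq (ctr j) (ang j)) = 0)
    (y : Plane) (F : Finset (Fin k))
    (hF : ∀ i ∈ F, unitSq (ctr i) (ang i) ⊆ ball y 6) : F.card ≤ 144 := by
  have hsum : ∑ i ∈ F, volume (unitSq (ctr i) (ang i)) =
      volume (⋃ i ∈ F, unitSq (ctr i) (ang i)) := by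
    rw [measure_biUnion_finset₀]
    · intro i _ j _ hij
      exact hdisj i j hij
    · intro i _
      exact (unitSq_measurable _ _).nullMeasurableSet
  have h1 : (F.card : ENNReal) = ∑ i ∈ F, volume (unitSq (ctr i) (ang i)) := by
    rw [Finset.sum_congr rfl (fun i _ => volume_unitSq (ctr i) (ang i))]
    simp
  have h2 : volume (⋃ i ∈ F, unitSq (ctr i) (ang i)) ≤ volume (ball y 6) := by
    apply measure_mono
    exact Set.iUnion₂_subset hF
  have h3 : volume (ball y (6:ℝ)) ≤ ENNReal.ofReal 144 := by
    have := volume_ball_le y 6 (by norm_num)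
    calc volume (ball y (6:ℝ)) ≤ ENNReal.ofReal (2*6) * ENNReal.ofReal (2*6) := this
      _ = ENNReal.ofReal 144 := by
          rw [← ENNReal.ofReal_mul (by norm_num)]; norm_num
  have : (F.card : ENNReal) ≤ ((144 : ℕ) : ENNReal) := by
    rw [h1, hsum]
    refine (h2.trans h3).trans_eq ?_
    simp
  exact_mod_cast this

-- ### the greedy selection lemma

lemma greedy_selection {m : ℕ} (θ : Fin m → ℝ) (hθ : ∀ e, 0 ≤ θ e) (P : Fin m → Plane)
    (hcluster : ∀ e₀ : Fin m,
      (Finset.univ.filter (fun e => dist (P e) (P e₀) < 4)).card ≤ 145) :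
    ∀ (E : Finset (Fin m)), ∃ S ⊆ E,
      ((S : Set (Fin m)).Pairwise fun e f => 4 ≤ dist (P e) (P f)) ∧
      ∑ e ∈ E, θ e ≤ 146 * ∑ e ∈ S, θ e := by
  intro E
  induction E using Finset.strongInduction with
  | _ E ih =>
  rcases E.eq_empty_or_nonempty with rfl | hne
  · exact ⟨∅, Finset.Subset.refl _, by simp, by simp⟩
  obtain ⟨e₀, he₀E, he₀max⟩ := E.exists_max_image θ hne
  classical
  set D := E.filter (fun e => dist (P e) (P e₀) < 4) with hD
  have he₀D : e₀ ∈ D := by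
    rw [hD, Finset.mem_filter]
    exact ⟨he₀E, by simp⟩
  have hDcard : D.card ≤ 145 := by
    calc D.card ≤ (Finset.univ.filter (fun e => dist (P e) (P e₀) < 4)).card := by
          apply Finset.card_le_card
          intro e he
          rw [Finset.mem_filter] at he ⊢
          exact ⟨Finset.mem_univ e, he.2⟩
      _ ≤ 145 := hcluster e₀
  set E' := E \ D with hE'
  have hE'ss : E' ⊂ E := by
    refine Finset.sdiff_ssubset ?_ ⟨e₀, he₀D⟩
    rw [hD]; exact Finset.filter_subset _ _
  obtain ⟨S', hS'sub, hS'pair, hS'sum⟩ := ih E' hE'ss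
  refine ⟨insert e₀ S', ?_, ?_, ?_⟩
  · intro e he
    rw [Finset.mem_insert] at he
    rcases he with rfl | he
    · exact he₀E
    · exact (Finset.sdiff_subset) (hS'sub he)
  · intro e he f hf hef
    simp only [Finset.coe_insert, Set.mem_insert_iff] at he hf
    have hfar : ∀ g ∈ S', 4 ≤ dist (P g) (P e₀) := by
      intro g hg
      have : g ∈ E' := hS'sub hg
      rw [hE', Finset.mem_sdiff] at this
      have : ¬ (dist (P g) (P e₀) < 4) := by
        intro hc
        exact this.2 (by rw [hD, Finset.mem_filter]; exact ⟨this.1, hc⟩)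
      linarith [not_lt.mp this]
    rcases he with rfl | he <;> rcases hf with rfl | hf
    · exact absurd rfl hef
    · rw [dist_comm]; exact hfar f hf
    · exact hfar e he
    · exact hS'pair he hf hef
  · have hsplit : ∑ e ∈ E, θ e = ∑ e ∈ D, θ e + ∑ e ∈ E', θ e := by
      rw [hE', Finset.sum_sdiff_eq_sub (by rw [hD]; exact Finset.filter_subset _ _)]
      ring
    have hDsum : ∑ e ∈ D, θ e ≤ 145 * θ e₀ := by
      calc ∑ e ∈ D, θ e ≤ ∑ _e ∈ D, θ e₀ := by
            apply Finset.sum_le_sum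
            intro e he
            exact he₀max e (by rw [hD] at he; exact (Finset.mem_filter.mp he).1)
        _ = D.card * θ e₀ := by rw [Finset.sum_const, nsmul_eq_mul]
        _ ≤ 145 * θ e₀ := by
            apply mul_le_mul_of_nonneg_right _ (hθ e₀)
            exact_mod_cast hDcard
    have he₀S' : e₀ ∉ S' := by
      intro hc
      have : e₀ ∈ E' := hS'sub hc
      rw [hE', Finset.mem_sdiff] at this
      exact this.2 he₀D
    have hins : ∑ e ∈ insert e₀ S', θ e = θ e₀ + ∑ e ∈ S', θ e := Finset.sum_insert he₀S'
    have hS'nonneg : 0 ≤ ∑ e ∈ S', θ e := Finset.sum_nonneg fun e _ => hθ e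
    rw [hsplit, hins]
    nlinarith [hθ e₀]
-- ### the chain graph

def nodeSet (x : ℝ) {k : ℕ} (ctr : Fin k → Plane) (ang : Fin k → ℝ) :
    Option (Fin k) → Set Plane :=
  fun v => v.elim (frontier (bigSq x)) (fun j => unitSq (ctr j) (ang j))

def angOf {k : ℕ} (ang : Fin k → ℝ) : Option (Fin k) → ℝ := fun v => v.elim 0 ang

def nearPath (γ : ℝ → Plane) (l : ℝ) {k : ℕ} (ctr : Fin k → Plane) (ang : Fin k → ℝ) :
    Option (Fin k) → Prop :=
  fun v => v.elim True
    (fun i => ∃ t ∈ Set.Icc 0 l, infDist (γ t) (unitSq (ctr i) (ang i)) ≤ 1/4)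

def chainGraph (x : ℝ) {k : ℕ} (ctr : Fin k → Plane) (ang : Fin k → ℝ)
    (γ : ℝ → Plane) (l : ℝ) : SimpleGraph (Option (Fin k)) where
  Adj u v := u ≠ v ∧ setDist (nodeSet x ctr ang u) (nodeSet x ctr ang v) ≤ 1 ∧
    nearPath γ l ctr ang u ∧ nearPath γ l ctr ang v
  symm := ⟨by
    rintro u v ⟨h1, h2, h3, h4⟩
    exact ⟨h1.symm, by rwa [setDist_comm], h4, h3⟩⟩
  loopless := ⟨fun v h => h.1 rfl⟩

/-- The property of being a valid node for time `t`. -/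
def NodeProp (x : ℝ) {k : ℕ} (ctr : Fin k → Plane) (ang : Fin k → ℝ) (γ : ℝ → Plane)
    (u : Option (Fin k)) (t : ℝ) : Prop :=
  (u = none ∧ infDist (γ t) (bigSq x)ᶜ ≤ 1/4) ∨
  (∃ i, u = some i ∧ infDist (γ t) (unitSq (ctr i) (ang i)) ≤ 1/4 ∧ γ t ∈ bigSq x)

lemma exists_point_near {S : Set Plane} (hS : S.Nonempty) {z : Plane} {r ε : ℝ}
    (h : infDist z S ≤ r) (hε : 0 < ε) : ∃ q ∈ S, dist z q ≤ r + ε := by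
  obtain ⟨q, hq, hd⟩ := (Metric.infDist_lt_iff hS).mp (h.trans_lt (lt_add_of_pos_right _ hε))
  exact ⟨q, hq, hd.le⟩

lemma sq_frontier_dist (x : ℝ) {k : ℕ} (ctr : Fin k → Plane) (ang : Fin k → ℝ)
    (γ : ℝ → Plane) {i : Fin k} {s s' : ℝ}
    (hi : infDist (γ s) (unitSq (ctr i) (ang i)) ≤ 1/4) (hin : γ s ∈ bigSq x)
    (hc : infDist (γ s') (bigSq x)ᶜ ≤ 1/4) (hss : dist (γ s) (γ s') ≤ 1/2) :
    setDist (unitSq (ctr i) (ang i)) (frontier (bigSq x)) ≤ 1 := by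
  refine le_of_forall_pos_le_add fun ε hε => ?_
  obtain ⟨q, hq, hdq⟩ := exists_point_near (unitSq_nonempty _ _) hi (half_pos hε)
  have hcne : ((bigSq x)ᶜ : Set Plane).Nonempty := by
    refine ⟨WithLp.toLp 2 ![-1, -1], fun h => ?_⟩
    have h0 := h.1.1
    have hc0 : (WithLp.toLp 2 ![-1, -1] : Plane) 0 = -1 := rfl
    rw [hc0] at h0
    linarith
  obtain ⟨z, hz, hdz⟩ := exists_point_near hcne hc (half_pos hε)
  obtain ⟨w, hw, hdw⟩ := exists_frontier_segment hin (Set.notMem_of_mem_compl hz)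
  have h1 : dist (γ s) z ≤ 1/2 + (1/4 + ε/2) := by
    calc dist (γ s) z ≤ dist (γ s) (γ s') + dist (γ s') z := dist_triangle _ _ _
      _ ≤ 1/2 + (1/4 + ε/2) := add_le_add hss hdz
  have h2 : dist q w ≤ (1/4 + ε/2) + (1/2 + (1/4 + ε/2)) := by
    calc dist q w ≤ dist q (γ s) + dist (γ s) w := dist_triangle _ _ _
      _ ≤ (1/4 + ε/2) + (1/2 + (1/4 + ε/2)) := by
          refine add_le_add (by rwa [dist_comm]) (hdw.trans h1)
  calc setDist (unitSq (ctr i) (ang i)) (frontier (bigSq x)) ≤ dist q w := setDist_le hq hw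
    _ ≤ 1 + ε := by linarith

lemma sq_sq_dist {k : ℕ} (ctr : Fin k → Plane) (ang : Fin k → ℝ)
    (γ : ℝ → Plane) {i j : Fin k} {s s' : ℝ}
    (hi : infDist (γ s) (unitSq (ctr i) (ang i)) ≤ 1/4)
    (hj : infDist (γ s') (unitSq (ctr j) (ang j)) ≤ 1/4)
    (hss : dist (γ s) (γ s') ≤ 1/2) :
    setDist (unitSq (ctr i) (ang i)) (unitSq (ctr j) (ang j)) ≤ 1 := by
  refine le_of_forall_pos_le_add fun ε hε => ?_
  obtain ⟨q, hq, hdq⟩ := exists_point_near (unitSq_nonempty _ _) hi (half_pos hε)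
  obtain ⟨q', hq', hdq'⟩ := exists_point_near (unitSq_nonempty _ _) hj (half_pos hε)
  calc setDist (unitSq (ctr i) (ang i)) (unitSq (ctr j) (ang j)) ≤ dist q q' := setDist_le hq hq'
    _ ≤ dist q (γ s) + dist (γ s) (γ s') + dist (γ s') q' := dist_triangle4 _ _ _ _
    _ ≤ (1/4 + ε/2) + 1/2 + (1/4 + ε/2) := by
        refine add_le_add (add_le_add (by rwa [dist_comm]) hss) hdq'
    _ ≤ 1 + ε := by linarith

lemma node_step (x : ℝ) {k : ℕ} (ctr : Fin k → Plane) (ang : Fin k → ℝ)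
    (γ : ℝ → Plane) (l : ℝ) {t t' : ℝ} (ht : t ∈ Set.Icc 0 l) (ht' : t' ∈ Set.Icc 0 l)
    (hd : dist (γ t) (γ t') ≤ 1/2) {u v : Option (Fin k)}
    (hu : NodeProp x ctr ang γ u t) (hv : NodeProp x ctr ang γ v t') :
    u = v ∨ (chainGraph x ctr ang γ l).Adj u v := by
  have hnearu : nearPath γ l ctr ang u := by
    rcases hu with ⟨rfl, _⟩ | ⟨i, rfl, hi, _⟩
    · trivial
    · exact ⟨t, ht, hi⟩
  have hnearv : nearPath γ l ctr ang v := by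
    rcases hv with ⟨rfl, _⟩ | ⟨i, rfl, hi, _⟩
    · trivial
    · exact ⟨t', ht', hi⟩
  rcases hu with ⟨rfl, hcu⟩ | ⟨i, rfl, hi, hin⟩
  · rcases hv with ⟨rfl, hcv⟩ | ⟨i', rfl, hi', hin'⟩
    · exact Or.inl rfl
    · refine Or.inr (show _ ∧ _ ∧ _ ∧ _ from ⟨by simp, ?_, hnearu, hnearv⟩)
      show setDist (frontier (bigSq x)) (unitSq (ctr i') (ang i')) ≤ 1
      rw [setDist_comm]
      exact sq_frontier_dist x ctr ang γ hi' hin' hcu (by rwa [dist_comm])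
  · rcases hv with ⟨rfl, hcv⟩ | ⟨i', rfl, hi', hin'⟩
    · refine Or.inr (show _ ∧ _ ∧ _ ∧ _ from ⟨by simp, ?_, hnearu, hnearv⟩)
      show setDist (unitSq (ctr i) (ang i)) (frontier (bigSq x)) ≤ 1
      exact sq_frontier_dist x ctr ang γ hi hin hcv hd
    · by_cases hii : i = i'
      · exact Or.inl (by rw [hii])
      · refine Or.inr (show _ ∧ _ ∧ _ ∧ _ from ⟨by simpa using hii, ?_, hnearu, hnearv⟩)
        show setDist (unitSq (ctr i) (ang i)) (unitSq (ctr i') (ang i')) ≤ 1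
        exact sq_sq_dist ctr ang γ hi hi' hd
-- ### summation along walks

lemma list_sum_eq_fin {α : Type*} (L : List α) (g : α → ℝ) :
    (L.map g).sum = ∑ i : Fin L.length, g (L.get i) := by
  rw [← List.ofFn_getElem_eq_map, Fin.sum_ofFn]; rfl

lemma walk_angle_le {k : ℕ} (ang : Fin k → ℝ) {G : SimpleGraph (Option (Fin k))}
    {u v : Option (Fin k)} (w : G.Walk u v) :
    sqAngle (angOf ang u) (angOf ang v) ≤
      (w.darts.map (fun d => sqAngle (angOf ang d.fst) (angOf ang d.snd))).sum := by
  induction w with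
  | nil => simp [sqAngle_self]
  | cons h p ih =>
    rename_i a' b' c' 
    simp only [SimpleGraph.Walk.darts_cons, List.map_cons, List.sum_cons]
    calc sqAngle (angOf ang a') (angOf ang c') ≤
        sqAngle (angOf ang a') (angOf ang b') + sqAngle (angOf ang b') (angOf ang c') :=
          sqAngle_triangle _ _ _
      _ ≤ _ := by
          refine add_le_add_right ih _

lemma ball_subset_thickening5 {X : Set Plane} {z : Plane} (hz : z ∈ X) {r : ℝ} (hr : r ≤ 5) :
    ball z r ⊆ Metric.thickening 5 X := by
  intro y hy
  rw [Metric.mem_thickening_iff]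
  exact ⟨z, hz, lt_of_lt_of_le (mem_ball.mp hy) hr⟩

lemma waste_mono (x : ℝ) {k : ℕ} (ctr : Fin k → Plane) (ang : Fin k → ℝ)
    {A B : Set Plane} (h : A ⊆ B) : waste x ctr ang A ≤ waste x ctr ang B := by
  apply measure_mono
  intro p hp
  exact ⟨⟨h hp.1.1, hp.1.2⟩, hp.2⟩
-- ### disks near the path are in the thickening

lemma disk_in_thickening {k : ℕ} (ctr : Fin k → Plane) (ang : Fin k → ℝ)
    (γ : ℝ → Plane) (l : ℝ) {i : Fin k} {q : Plane}
    (hnear : ∃ t ∈ Set.Icc 0 l, infDist (γ t) (unitSq (ctr i) (ang i)) ≤ 1/4)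
    (hsub : unitSq (ctr i) (ang i) ⊆ ball q 2) :
    ball q 2 ⊆ Metric.thickening 5 (γ '' Set.Icc 0 l) := by
  obtain ⟨t, ht, hinf⟩ := hnear
  obtain ⟨z, hz, hdz⟩ := exists_point_near (unitSq_nonempty _ _) hinf (by norm_num : (0:ℝ) < 1/4)
  have hzq : dist z q < 2 := mem_ball.mp (hsub hz)
  intro y hy
  rw [Metric.mem_thickening_iff]
  refine ⟨γ t, ⟨t, ht, rfl⟩, ?_⟩
  have : dist y (γ t) ≤ dist y q + dist q z + dist z (γ t) := dist_triangle4 _ _ _ _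
  have h1 : dist y q < 2 := mem_ball.mp hy
  have h2 : dist q z < 2 := by rwa [dist_comm]
  have h3 : dist z (γ t) ≤ 1/2 := by rw [dist_comm]; linarith
  linarith

set_option maxHeartbeats 1000000 in
theorem stmt14 (x : ℝ) (k : ℕ) (ctr : Fin k → Plane) (ang : Fin k → ℝ)
    (hsub : ∀ i, unitSq (ctr i) (ang i) ⊆ bigSq x)
    (hdisj : ∀ i j, i ≠ j →
      volume (unitSq (ctr i) (ang i) ∩ unitSq (ctr j) (ang j)) = 0)
    -- the fundamental lemma: `b = none` denotes the boundary of the big square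
    -- (with orientation angle `0`), `b = some j` denotes the `j`-th unit square.
    (hfund : ∀ a : Fin k, ∀ b : Option (Fin k), b ≠ some a →
      setDist (unitSq (ctr a) (ang a))
          (b.elim (frontier (bigSq x)) (fun j => unitSq (ctr j) (ang j))) ≤ 1 →
      ∃ p : Plane, unitSq (ctr a) (ang a) ⊆ ball p 2 ∧
        ENNReal.ofReal (rothC * sqAngle (ang a) (b.elim 0 ang)) ≤
          waste x ctr ang (ball p 2))
    (a b : Fin k) (l : ℝ) (hl : 0 ≤ l) (γ : ℝ → Plane)
    (hγ : ContinuousOn γ (Set.Icc 0 l))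
    (hγ0 : γ 0 ∈ unitSq (ctr a) (ang a)) (hγl : γ l ∈ unitSq (ctr b) (ang b)) :
    ENNReal.ofReal (rothC / 1600 * sqAngle (ang a) (ang b)) ≤
      waste x ctr ang (Metric.thickening 5 (γ '' Set.Icc 0 l)) := by
  classical
  have hΘ0 : 0 ≤ sqAngle (ang a) (ang b) := sqAngle_nonneg _ _
  have hΘ4 : sqAngle (ang a) (ang b) ≤ π / 4 := sqAngle_le_pi_div_four _ _
  have hΘ1 : sqAngle (ang a) (ang b) ≤ 1 := by
    have := Real.pi_le_four; linarith
  have hc0 : (0:ℝ) < rothC := by rw [rothC]; positivity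
  have hc1 : rothC ≤ 1 := by rw [rothC]; norm_num
  by_cases hbad : ∃ t ∈ Set.Icc 0 l, 1/4 < infDist (γ t) (bigSq x)ᶜ ∧
      ∀ i, 1/4 < infDist (γ t) (unitSq (ctr i) (ang i))
  · -- wasted-ball case
    obtain ⟨t, ht, hbig, hsqf⟩ := hbad
    have hzin : γ t ∈ bigSq x := by
      by_contra h
      have h0 : infDist (γ t) (bigSq x)ᶜ = 0 := Metric.infDist_zero_of_mem h
      linarith
    have hball : ball (γ t) (1/4) ⊆ bigSq x := ball_subset_of_infDist_compl hbig.le hzin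
    have hsub5 : ball (γ t) (1/4) ⊆ Metric.thickening 5 (γ '' Set.Icc 0 l) :=
      ball_subset_thickening5 (X := γ '' Set.Icc 0 l) (Set.mem_image_of_mem γ ht) (by norm_num)
    have hkey : ball (γ t) (1/4) ⊆
        (Metric.thickening 5 (γ '' Set.Icc 0 l) ∩ bigSq x) \ ⋃ i, unitSq (ctr i) (ang i) := by
      intro y hy
      refine ⟨⟨hsub5 hy, hball hy⟩, ?_⟩
      intro hyU
      rw [Set.mem_iUnion] at hyU
      obtain ⟨i, hyS⟩ := hyU
      have h1 : infDist (γ t) (unitSq (ctr i) (ang i)) ≤ dist (γ t) y :=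
        Metric.infDist_le_dist_of_mem hyS
      rw [mem_ball, dist_comm] at hy
      have := hsqf i
      linarith
    calc ENNReal.ofReal (rothC / 1600 * sqAngle (ang a) (ang b)) ≤ ENNReal.ofReal (1/64) := by
          apply ENNReal.ofReal_le_ofReal
          nlinarith
      _ ≤ volume (ball (γ t) (1/4 : ℝ)) := volume_small_box_ge _
      _ ≤ waste x ctr ang (Metric.thickening 5 (γ '' Set.Icc 0 l)) := measure_mono hkey
  · -- main chain case
    push_neg at hbad
    have hnode : ∀ t ∈ Set.Icc 0 l, ∃ u, NodeProp x ctr ang γ u t := by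
      intro t ht
      by_cases hcd : infDist (γ t) (bigSq x)ᶜ ≤ 1/4
      · exact ⟨none, Or.inl ⟨rfl, hcd⟩⟩
      · push_neg at hcd
        obtain ⟨i, hi⟩ := hbad t ht hcd
        have hin : γ t ∈ bigSq x := by
          by_contra h
          have h0 : infDist (γ t) (bigSq x)ᶜ = 0 := Metric.infDist_zero_of_mem h
          linarith
        exact ⟨some i, Or.inr ⟨i, rfl, hi, hin⟩⟩
    -- uniform continuity
    obtain ⟨δ, hδ, huc⟩ : ∃ δ > 0, ∀ s ∈ Set.Icc 0 l, ∀ t ∈ Set.Icc 0 l,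
        dist s t ≤ δ → dist (γ s) (γ t) ≤ 1/2 := by
      have h := (isCompact_Icc.uniformContinuousOn_of_continuous hγ)
      rw [Metric.uniformContinuousOn_iff_le] at h
      obtain ⟨δ, hδ, hh⟩ := h (1/2) (by norm_num)
      exact ⟨δ, hδ, fun s hs t ht hd => hh s hs t ht hd⟩
    set n : ℕ := ⌈l/δ⌉₊ + 1 with hn
    have hnpos : 0 < n := Nat.succ_pos _
    have hnR : (0:ℝ) < n := by exact_mod_cast hnpos
    have hln : l / n ≤ δ := by
      rw [div_le_iff₀ hnR]
      have h1 : l / δ ≤ (⌈l/δ⌉₊ : ℝ) := Nat.le_ceil _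
      have h2 : ((⌈l/δ⌉₊ : ℝ) + 1) = (n:ℝ) := by rw [hn]; push_cast; ring
      have h3 : l / δ ≤ (n:ℝ) := by rw [← h2]; linarith
      calc l = (l/δ) * δ := by field_simp
        _ ≤ (n:ℝ) * δ := by nlinarith
        _ = δ * (n:ℝ) := by ring
    set τ : ℕ → ℝ := fun j => (j:ℝ) * l / n with hτ
    have hτmem : ∀ j ≤ n, τ j ∈ Set.Icc 0 l := by
      intro j hj
      constructor
      · rw [hτ]; positivity
      · rw [hτ, div_le_iff₀ hnR]
        have : (j:ℝ) ≤ (n:ℝ) := by exact_mod_cast hj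
        nlinarith
    have hτstep : ∀ j : ℕ, dist (τ j) (τ (j+1)) ≤ δ := by
      intro j
      rw [Real.dist_eq, hτ]
      have : (j:ℝ) * l / n - ((j:ℕ)+1:ℝ) * l / n = -(l/n) := by push_cast; ring
      rw [show ((j:ℕ):ℝ) * l / ↑n - (((j:ℕ)+1:ℕ):ℝ) * l / ↑n = -(l/n) by push_cast; ring]
      rw [abs_neg, abs_of_nonneg (by positivity)]
      exact hln
    have hγstep : ∀ j : ℕ, j + 1 ≤ n → dist (γ (τ j)) (γ (τ (j+1))) ≤ 1/2 := by
      intro j hj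
      exact huc _ (hτmem j (by omega)) _ (hτmem (j+1) hj) (hτstep j)
    set ν : ℕ → Option (Fin k) := fun j =>
      if h : τ j ∈ Set.Icc 0 l then (hnode (τ j) h).choose else none with hν
    have hνprop : ∀ j ≤ n, NodeProp x ctr ang γ (ν j) (τ j) := by
      intro j hj
      rw [hν]
      simp only
      rw [dif_pos (hτmem j hj)]
      exact (hnode (τ j) (hτmem j hj)).choose_spec
    set G := chainGraph x ctr ang γ l with hG
    have hτ0 : τ 0 = 0 := by rw [hτ]; simp
    have hτn : τ n = l := by rw [hτ]; field_simp
    have hpropa : NodeProp x ctr ang γ (some a) (τ 0) := by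
      rw [hτ0]
      exact Or.inr ⟨a, rfl, by rw [Metric.infDist_zero_of_mem hγ0]; norm_num, hsub a hγ0⟩
    have hpropb : NodeProp x ctr ang γ (some b) (τ n) := by
      rw [hτn]
      exact Or.inr ⟨b, rfl, by rw [Metric.infDist_zero_of_mem hγl]; norm_num, hsub b hγl⟩
    have hstepreach : ∀ (u v : Option (Fin k)), u = v ∨ G.Adj u v → G.Reachable u v := by
      rintro u v (rfl | h)
      · exact SimpleGraph.Reachable.refl u
      · exact h.reachable
    have hreach : ∀ j ≤ n, G.Reachable (some a) (ν j) := by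
      intro j
      induction j with
      | zero =>
        intro _
        refine hstepreach _ _ (node_step x ctr ang γ l (hτmem 0 (by omega)) (hτmem 0 (by omega))
          (by rw [dist_self]; norm_num) hpropa (hνprop 0 (by omega)))
      | succ j ih =>
        intro hj
        have h1 := ih (by omega)
        have h2 := hstepreach _ _ (node_step x ctr ang γ l (hτmem j (by omega))
          (hτmem (j+1) hj) (hγstep j hj) (hνprop j (by omega)) (hνprop (j+1) hj))
        exact h1.trans h2
    have hreachb : G.Reachable (some a) (some b) := by
      have h1 := hreach n (le_refl n)
      have h2 := hstepreach _ _ (node_step x ctr ang γ l (hτmem n (le_refl n))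
        (hτmem n (le_refl n)) (by rw [dist_self]; norm_num) (hνprop n (le_refl n)) hpropb)
      exact h1.trans h2
    obtain ⟨w⟩ := hreachb
    set p := w.bypass with hp
    have hpath : p.IsPath := w.bypass_isPath
    set L := p.darts with hL
    set m := L.length with hm
    -- per-edge data
    have hdata : ∀ e : Fin m, ∃ (i : Fin k) (q : Plane),
        ((L.get e).fst = some i ∨ (L.get e).fst = none) ∧
        unitSq (ctr i) (ang i) ⊆ ball q 2 ∧
        ENNReal.ofReal (rothC * sqAngle (angOf ang (L.get e).fst) (angOf ang (L.get e).snd)) ≤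
          waste x ctr ang (ball q 2) ∧
        ball q 2 ⊆ Metric.thickening 5 (γ '' Set.Icc 0 l) := by
      intro e
      set d := L.get e with hd
      have hadj : G.Adj d.fst d.snd := d.adj
      obtain ⟨hne, hsd, hnu, hnv⟩ : _ ∧ _ ∧ _ ∧ _ := hadj
      match hfst : d.fst with
      | some i =>
        have hvne : d.snd ≠ some i := by rw [← hfst]; exact fun h => hne h.symm
        have hsd' : setDist (unitSq (ctr i) (ang i))
            (d.snd.elim (frontier (bigSq x)) (fun j => unitSq (ctr j) (ang j))) ≤ 1 := by
          rw [hfst] at hsd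
          exact hsd
        obtain ⟨q, hq1, hq2⟩ := hfund i d.snd hvne hsd'
        refine ⟨i, q, Or.inl rfl, hq1, ?_, ?_⟩
        · exact hq2
        · refine disk_in_thickening ctr ang γ l ?_ hq1
          rw [hfst] at hnu
          exact hnu
      | none =>
        match hsnd : d.snd with
        | none => exact absurd (hfst.trans hsnd.symm) hne
        | some i' =>
          have hsd' : setDist (unitSq (ctr i') (ang i'))
              ((none : Option (Fin k)).elim (frontier (bigSq x))
                (fun j => unitSq (ctr j) (ang j))) ≤ 1 := by
            rw [hfst, hsnd] at hsd
            rw [setDist_comm] at hsd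
            exact hsd
          obtain ⟨q, hq1, hq2⟩ := hfund i' none (by simp) hsd'
          refine ⟨i', q, Or.inr rfl, hq1, ?_, ?_⟩
          · have heq : sqAngle (angOf ang (none : Option (Fin k))) (angOf ang (some i')) =
                sqAngle (ang i') ((none : Option (Fin k)).elim 0 ang) := sqAngle_symm _ _
            rw [heq]
            exact hq2
          · refine disk_in_thickening ctr ang γ l ?_ hq1
            rw [hsnd] at hnv
            exact hnv
    choose sqSel Pq hLE hSball hwaste hthick using hdata
    -- injectivity of left endpoints
    have hnodup : (L.map (·.fst)).Nodup := by
      rw [hL, SimpleGraph.Walk.map_fst_darts]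
      exact hpath.support_nodup.sublist (List.dropLast_sublist _)
    have hinj : Function.Injective (fun e : Fin m => (L.get e).fst) := by
      intro e f hef
      simp only at hef
      have he' : (L.map (·.fst))[(e:ℕ)]'(by rw [List.length_map]; exact e.isLt) = (L.get e).fst := by
        rw [List.getElem_map]
        rfl
      have hf' : (L.map (·.fst))[(f:ℕ)]'(by rw [List.length_map]; exact f.isLt) = (L.get f).fst := by
        rw [List.getElem_map]
        rfl
      have : (e:ℕ) = (f:ℕ) := by
        rw [← List.Nodup.getElem_inj_iff hnodup]
        rw [he', hf', hef]
        · rw [List.length_map]; exact e.isLt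
        · rw [List.length_map]; exact f.isLt
      exact Fin.ext this
    -- cluster bound
    have hcluster : ∀ e₀ : Fin m,
        (Finset.univ.filter (fun e => dist (Pq e) (Pq e₀) < 4)).card ≤ 145 := by
      intro e₀
      set F := Finset.univ.filter (fun e => dist (Pq e) (Pq e₀) < 4) with hF
      set Fsq := Finset.univ.filter
        (fun i : Fin k => unitSq (ctr i) (ang i) ⊆ ball (Pq e₀) 6) with hFsq
      have hFsqcard : Fsq.card ≤ 144 :=
        squares_count ctr ang hdisj (Pq e₀) Fsq (fun i hi => (Finset.mem_filter.mp hi).2)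
      have himg : F.image (fun e => (L.get e).fst) ⊆ insert none (Fsq.image some) := by
        intro u hu
        obtain ⟨e, he, rfl⟩ := Finset.mem_image.mp hu
        rcases hLE e with hcase | hcase
        · rw [hcase]
          apply Finset.mem_insert_of_mem
          apply Finset.mem_image_of_mem
          rw [hFsq, Finset.mem_filter]
          refine ⟨Finset.mem_univ _, ?_⟩
          intro y hy
          have h1 : dist y (Pq e) < 2 := mem_ball.mp (hSball e hy)
          have h2 : dist (Pq e) (Pq e₀) < 4 := by
            rw [hF] at he
            exact (Finset.mem_filter.mp he).2
          rw [mem_ball]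
          calc dist y (Pq e₀) ≤ dist y (Pq e) + dist (Pq e) (Pq e₀) := dist_triangle _ _ _
            _ < 6 := by linarith
        · rw [hcase]
          exact Finset.mem_insert_self _ _
      calc F.card = (F.image (fun e => (L.get e).fst)).card :=
            (Finset.card_image_of_injective F hinj).symm
        _ ≤ (insert none (Fsq.image some)).card := Finset.card_le_card himg
        _ ≤ (Fsq.image some).card + 1 := Finset.card_insert_le _ _
        _ ≤ Fsq.card + 1 := by
            have := Finset.card_image_le (s := Fsq) (f := some)
            omega
        _ ≤ 145 := by omega
    -- angle sums
    set θf : Fin m → ℝ :=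
      fun e => sqAngle (angOf ang (L.get e).fst) (angOf ang (L.get e).snd) with hθf
    have hθf0 : ∀ e, 0 ≤ θf e := fun e => sqAngle_nonneg _ _
    have hΘsum : sqAngle (ang a) (ang b) ≤ ∑ e : Fin m, θf e := by
      have h1 := walk_angle_le ang p
      have h2 : (L.map (fun d => sqAngle (angOf ang d.fst) (angOf ang d.snd))).sum =
          ∑ e : Fin m, θf e := list_sum_eq_fin L _
      have h3 : angOf ang (some a) = ang a := rfl
      have h4 : angOf ang (some b) = ang b := rfl
      rw [h3, h4] at h1
      rw [← h2]
      exact h1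
    obtain ⟨S, hSsub, hSpair, hSsum⟩ :=
      greedy_selection θf hθf0 Pq hcluster Finset.univ
    -- disjoint wasted pieces
    set W : Fin m → Set Plane :=
      fun e => (ball (Pq e) 2 ∩ bigSq x) \ ⋃ i, unitSq (ctr i) (ang i) with hW
    have hWmeas : ∀ e, MeasurableSet (W e) := by
      intro e
      exact (isOpen_ball.measurableSet.inter (bigSq_measurable x)).diff
        (MeasurableSet.iUnion (fun i => unitSq_measurable _ _))
    have hWdisj : (S : Set (Fin m)).PairwiseDisjoint W := by
      intro e he f hf hef
      have hd : 4 ≤ dist (Pq e) (Pq f) := hSpair he hf hef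
      have : Disjoint (ball (Pq e) 2) (ball (Pq f) 2) :=
        ball_disjoint_ball (by linarith)
      exact this.mono (Set.diff_subset.trans Set.inter_subset_left)
        (Set.diff_subset.trans Set.inter_subset_left)
    have hWsum : ∑ e ∈ S, volume (W e) = volume (⋃ e ∈ S, W e) :=
      (measure_biUnion_finset hWdisj (fun e _ => hWmeas e)).symm
    have hWsub : (⋃ e ∈ S, W e) ⊆
        (Metric.thickening 5 (γ '' Set.Icc 0 l) ∩ bigSq x) \ ⋃ i, unitSq (ctr i) (ang i) := by
      intro y hy
      obtain ⟨s, ⟨e, rfl⟩, hy2⟩ := hy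
      simp only [Set.mem_iUnion, exists_prop] at hy2
      obtain ⟨heS, hyW⟩ := hy2
      exact ⟨⟨hthick e (hyW.1.1), hyW.1.2⟩, hyW.2⟩
    -- final chain of inequalities
    have hreal : rothC / 1600 * sqAngle (ang a) (ang b) ≤ ∑ e ∈ S, rothC * θf e := by
      rw [← Finset.mul_sum]
      have hS0 : 0 ≤ ∑ e ∈ S, θf e := Finset.sum_nonneg (fun e _ => hθf0 e)
      have huniv : sqAngle (ang a) (ang b) ≤ 146 * ∑ e ∈ S, θf e := hΘsum.trans hSsum
      nlinarith
    calc ENNReal.ofReal (rothC / 1600 * sqAngle (ang a) (ang b)) ≤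
        ENNReal.ofReal (∑ e ∈ S, rothC * θf e) := ENNReal.ofReal_le_ofReal hreal
      _ = ∑ e ∈ S, ENNReal.ofReal (rothC * θf e) :=
          ENNReal.ofReal_sum_of_nonneg (fun e _ => mul_nonneg hc0.le (hθf0 e))
      _ ≤ ∑ e ∈ S, volume (W e) := by
          apply Finset.sum_le_sum
          intro e _
          exact hwaste e
      _ = volume (⋃ e ∈ S, W e) := hWsum
      _ ≤ waste x ctr ang (Metric.thickening 5 (γ '' Set.Icc 0 l)) := measure_mono hWsub
end
end
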